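/- Let w be a weight structure on a triangulated category C whose heart Hw is idempotent complete (C is weight-Karoubian). If an object O of C is without weights m,…,n (for m ≤ n integers), then there exists a distinguished triangle X → O → Y → X[1] with X ∈ C_{w≤m-1} and Y ∈ C_{w≥n+1}. -/

import Mathlib

open CategoryTheory Limits Pretriangulated

structure WeightStructure (C : Type*) [Category C] [Preadditive C] [HasZeroObject C]
    [HasShift C ℤ] [∀ n : ℤ, (CategoryTheory.shiftFunctor C n).Additive] [Pretriangulated C] where
  le : Set C
  ge : Set C
  le_retract : ∀ ⦃X Y : C⦄, Y ∈ le → ∀ (i : X ⟶ Y) (r : Y ⟶ X), i ≫ r = 𝟙 X → X ∈ le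
  ge_retract : ∀ ⦃X Y : C⦄, Y ∈ ge → ∀ (i : X ⟶ Y) (r : Y ⟶ X), i ≫ r = 𝟙 X → X ∈ ge
  le_shift : ∀ ⦃X : C⦄, X ∈ le → X⟦(-1 : ℤ)⟧ ∈ le
  ge_shift : ∀ ⦃X : C⦄, X ∈ ge → X⟦(1 : ℤ)⟧ ∈ ge
  orth : ∀ ⦃X Y : C⦄, X ∈ le → Y ∈ ge → ∀ f : X ⟶ Y⟦(1 : ℤ)⟧, f = 0
  decomp : ∀ M : C, ∃ (L R : C) (f : L ⟶ M) (g : M ⟶ R) (δ : R ⟶ L⟦(1 : ℤ)⟧),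
    (Triangle.mk f g δ ∈ distTriang C) ∧ L ∈ le ∧ R⟦(-1 : ℤ)⟧ ∈ ge

namespace WeightStructure

variable {C : Type*} [Category C] [Preadditive C] [HasZeroObject C]
  [HasShift C ℤ] [∀ n : ℤ, (CategoryTheory.shiftFunctor C n).Additive] [Pretriangulated C]
  (w : WeightStructure C)

/-- The class `C_{w ≤ n} = C_{w≤0}[n]`. -/
def Le (n : ℤ) : Set C := {X | X⟦(-n)⟧ ∈ w.le}

/-- The class `C_{w ≥ n} = C_{w≥0}[n]`. -/
def Ge (n : ℤ) : Set C := {X | X⟦(-n)⟧ ∈ w.ge}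

/-- `f, g, δ` form a `k`-weight decomposition triangle of `M`. -/
def IsWeightDecomp (k : ℤ) {A M B : C} (f : A ⟶ M) (g : M ⟶ B) (δ : B ⟶ A⟦(1 : ℤ)⟧) : Prop :=
  (Triangle.mk f g δ ∈ distTriang C) ∧ A ∈ w.Le k ∧ B ∈ w.Ge (k + 1)

/-- `g : M ⟶ N` kills weights `m,…,n`. -/
def KillsWeights (m n : ℤ) {M N : C} (g : M ⟶ N) : Prop :=
  ∃ (A B A' B' : C) (a : A ⟶ M) (b : M ⟶ B) (δ : B ⟶ A⟦(1 : ℤ)⟧)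
    (a' : A' ⟶ N) (b' : N ⟶ B') (δ' : B' ⟶ A'⟦(1 : ℤ)⟧),
    w.IsWeightDecomp n a b δ ∧ w.IsWeightDecomp (m - 1) a' b' δ' ∧ a ≫ g ≫ b' = 0

/-- `M` is without weights `m,…,n`. -/
def WithoutWeights (m n : ℤ) (M : C) : Prop := w.KillsWeights m n (𝟙 M)

end WeightStructure

/-- The heart of `w` is idempotent complete: every idempotent endomorphism of an object of
`C_{w=0}` splits through an object of `C_{w=0}`. -/
def WeightStructure.WeightKaroubian {C : Type*} [Category C] [Preadditive C] [HasZeroObject C]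
    [HasShift C ℤ] [∀ n : ℤ, (CategoryTheory.shiftFunctor C n).Additive] [Pretriangulated C]
    (w : WeightStructure C) : Prop :=
  ∀ X : C, X ∈ w.Le 0 ∩ w.Ge 0 → ∀ e : X ⟶ X, e ≫ e = e →
    ∃ (Y : C) (_ : Y ∈ w.Le 0 ∩ w.Ge 0) (i : Y ⟶ X) (p : X ⟶ Y),
      i ≫ p = 𝟙 Y ∧ p ≫ i = e

namespace WeightStructure

variable {C : Type*} [Category C] [Preadditive C] [HasZeroObject C]
  [HasShift C ℤ] [∀ n : ℤ, (CategoryTheory.shiftFunctor C n).Additive] [Pretriangulated C]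
  (w : WeightStructure C)

-- ### auxiliary lemmas

lemma le_iso {X Y : C} (e : X ≅ Y) (h : Y ∈ w.le) : X ∈ w.le :=
  w.le_retract h e.hom e.inv e.hom_inv_id

lemma ge_iso {X Y : C} (e : X ≅ Y) (h : Y ∈ w.ge) : X ∈ w.ge :=
  w.ge_retract h e.hom e.inv e.hom_inv_id

lemma mem_Le {k : ℤ} {X : C} : X ∈ w.Le k ↔ X⟦(-k)⟧ ∈ w.le := Iff.rfl
lemma mem_Ge {k : ℤ} {X : C} : X ∈ w.Ge k ↔ X⟦(-k)⟧ ∈ w.ge := Iff.rfl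


lemma Le_retract {k : ℤ} {X Y : C} (h : Y ∈ w.Le k) (i : X ⟶ Y) (r : Y ⟶ X)
    (hir : i ≫ r = 𝟙 X) : X ∈ w.Le k := by
  refine w.le_retract h ((shiftFunctor C (-k)).map i) ((shiftFunctor C (-k)).map r) ?_
  rw [← (shiftFunctor C (-k)).map_comp, hir, (shiftFunctor C (-k)).map_id]

lemma Ge_retract {k : ℤ} {X Y : C} (h : Y ∈ w.Ge k) (i : X ⟶ Y) (r : Y ⟶ X)
    (hir : i ≫ r = 𝟙 X) : X ∈ w.Ge k := by
  refine w.ge_retract h ((shiftFunctor C (-k)).map i) ((shiftFunctor C (-k)).map r) ?_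
  rw [← (shiftFunctor C (-k)).map_comp, hir, (shiftFunctor C (-k)).map_id]

lemma Le_iso {k : ℤ} {X Y : C} (e : X ≅ Y) (h : Y ∈ w.Le k) : X ∈ w.Le k :=
  w.Le_retract h e.hom e.inv e.hom_inv_id

lemma Ge_iso {k : ℤ} {X Y : C} (e : X ≅ Y) (h : Y ∈ w.Ge k) : X ∈ w.Ge k :=
  w.Ge_retract h e.hom e.inv e.hom_inv_id

lemma le_shift_nat (j : ℕ) {X : C} (h : X ∈ w.le) : X⟦-(j : ℤ)⟧ ∈ w.le := by
  induction j with
  | zero =>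
      show X⟦(-0 : ℤ)⟧ ∈ w.le
      rw [neg_zero]
      exact w.le_iso ((shiftFunctorZero C ℤ).app X) h
  | succ j ih =>
      exact w.le_iso ((shiftFunctorAdd' C (-(j:ℤ)) (-1) (-((j+1 : ℕ) : ℤ))
        (by push_cast; ring)).app X) (w.le_shift ih)

lemma ge_shift_nat (j : ℕ) {X : C} (h : X ∈ w.ge) : X⟦(j : ℤ)⟧ ∈ w.ge := by
  induction j with
  | zero =>
      show X⟦(0 : ℤ)⟧ ∈ w.ge
      exact w.ge_iso ((shiftFunctorZero C ℤ).app X) h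
  | succ j ih =>
      exact w.ge_iso ((shiftFunctorAdd' C ((j:ℤ)) 1 (((j+1 : ℕ) : ℤ))
        (by push_cast; ring)).app X) (w.ge_shift ih)

lemma shift_mem_Le (a b : ℤ) {X : C} (h : X ∈ w.Le a) : X⟦b⟧ ∈ w.Le (a + b) :=
  w.le_iso (((shiftFunctorAdd' C b (-(a+b)) (-a) (by ring)).app X).symm) h

lemma shift_mem_Ge (a b : ℤ) {X : C} (h : X ∈ w.Ge a) : X⟦b⟧ ∈ w.Ge (a + b) :=
  w.ge_iso (((shiftFunctorAdd' C b (-(a+b)) (-a) (by ring)).app X).symm) h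

lemma Le_mono {a b : ℤ} (hab : a ≤ b) {X : C} (h : X ∈ w.Le a) : X ∈ w.Le b := by
  have h2 := w.le_shift_nat (b - a).toNat h
  rw [Int.toNat_of_nonneg (by omega)] at h2
  exact w.le_iso ((shiftFunctorAdd' C (-a) (-(b-a)) (-b) (by ring)).app X) h2

lemma Ge_anti {a b : ℤ} (hab : a ≤ b) {X : C} (h : X ∈ w.Ge b) : X ∈ w.Ge a := by
  have h2 := w.ge_shift_nat (b - a).toNat h
  rw [Int.toNat_of_nonneg (by omega)] at h2
  exact w.ge_iso ((shiftFunctorAdd' C (-b) (b-a) (-a) (by ring)).app X) h2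

/-- The key orthogonality property. -/
lemma horth {a b : ℤ} {X Y : C} (hX : X ∈ w.Le a) (hY : Y ∈ w.Ge b) (hab : a < b)
    (f : X ⟶ Y) : f = 0 := by
  have hY' : Y ∈ w.Ge (a + 1) := w.Ge_anti (by omega) hY
  have horth := w.orth hX hY' ((shiftFunctor C (-a)).map f ≫
    ((shiftFunctorAdd' C (-(a+1)) 1 (-a) (by ring)).app Y).hom)
  apply (shiftFunctor C (-a)).map_injective
  rw [(shiftFunctor C (-a)).map_zero]
  rw [← cancel_mono ((shiftFunctorAdd' C (-(a+1)) 1 (-a) (by ring)).app Y).hom]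
  simpa using horth

/-- Weight decomposition at an arbitrary level `k`. -/
lemma decompK (k : ℤ) (M : C) :
    ∃ (L R : C) (f : L ⟶ M) (g : M ⟶ R) (δ : R ⟶ L⟦(1 : ℤ)⟧),
      (Triangle.mk f g δ ∈ distTriang C) ∧ L ∈ w.Le k ∧ R ∈ w.Ge (k + 1) := by
  obtain ⟨L, R, f, g, δ, hT, hL, hR⟩ := w.decomp (M⟦(-k)⟧)
  have hsh : (Triangle.shiftFunctor C k).obj (Triangle.mk f g δ) ∈ distTriang C :=
    Triangle.shift_distinguished _ hT k
  set T₁ := (Triangle.shiftFunctor C k).obj (Triangle.mk f g δ) with hT₁def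
  let e₂ : ((M⟦(-k)⟧)⟦k⟧ : C) ≅ M := (shiftFunctorCompIsoId C (-k) k (by ring)).app M
  refine ⟨L⟦k⟧, R⟦k⟧, T₁.mor₁ ≫ e₂.hom, e₂.inv ≫ T₁.mor₂, T₁.mor₃, ?_, ?_, ?_⟩
  · refine isomorphic_distinguished _ hsh _ ?_
    exact Triangle.isoMk _ _ (Iso.refl _) e₂.symm (Iso.refl _)
      (by exact (Category.assoc _ _ _).trans (((congrArg (CategoryStruct.comp T₁.mor₁) e₂.hom_inv_id).trans (Category.comp_id _)).trans (Category.id_comp _).symm))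
      (by exact Category.comp_id _) (by exact (congrArg (CategoryStruct.comp T₁.mor₃) ((shiftFunctor C (1:ℤ)).map_id _)).trans ((Category.comp_id _).trans (Category.id_comp _).symm))
  · have hL0 : L ∈ w.Le 0 := by
      show L⟦(-0 : ℤ)⟧ ∈ w.le
      rw [neg_zero]
      exact w.le_iso ((shiftFunctorZero C ℤ).app L) hL
    have := w.shift_mem_Le 0 k hL0; rwa [zero_add] at this
  · have hR1 : R ∈ w.Ge 1 := hR
    have := w.shift_mem_Ge 1 k hR1; rwa [add_comm] at this

/-- Orthogonality characterization of `Le`. -/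
lemma charLe (k : ℤ) {X : C} (h : ∀ Z : C, Z ∈ w.Ge (k + 1) → ∀ φ : X ⟶ Z, φ = 0) :
    X ∈ w.Le k := by
  obtain ⟨L, R, f, g, δ, hT, hL, hR⟩ := w.decompK k X
  obtain ⟨s, hs⟩ := Triangle.coyoneda_exact₂ _ hT (𝟙 X)
    (by exact (Category.id_comp _).trans (h R hR g))
  exact w.Le_retract hL s f hs.symm

/-- Orthogonality characterization of `Ge`. -/
lemma charGe (k : ℤ) {Y : C} (h : ∀ Z : C, Z ∈ w.Le k → ∀ φ : Z ⟶ Y, φ = 0) :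
    Y ∈ w.Ge (k + 1) := by
  obtain ⟨L, R, f, g, δ, hT, hL, hR⟩ := w.decompK k Y
  obtain ⟨s, hs⟩ := Triangle.yoneda_exact₂ _ hT (𝟙 Y)
    (by exact (Category.comp_id _).trans (h L hL f))
  exact w.Ge_retract hR g s hs.symm

/-- Splitting idempotents of shifted heart objects. -/
lemma karSplit (hkar : ∀ X : C, X ∈ w.Le 0 ∩ w.Ge 0 → ∀ e : X ⟶ X, e ≫ e = e →
      ∃ (Y : C) (_ : Y ∈ w.Le 0 ∩ w.Ge 0) (i : Y ⟶ X) (p : X ⟶ Y),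
        i ≫ p = 𝟙 Y ∧ p ≫ i = e)
    (k : ℤ) {H : C} (h1 : H ∈ w.Le k) (h2 : H ∈ w.Ge k) (ε : H ⟶ H) (hε : ε ≫ ε = ε) :
    ∃ (H₀ : C), H₀ ∈ w.Le k ∧ H₀ ∈ w.Ge k ∧ ∃ (i₁ : H₀ ⟶ H) (p₁ : H ⟶ H₀),
      i₁ ≫ p₁ = 𝟙 H₀ ∧ p₁ ≫ i₁ = ε := by
  have hle0 : (H⟦(-k)⟧ : C) ∈ w.Le 0 := by
    have := w.shift_mem_Le k (-k) h1; rwa [add_neg_cancel] at this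
  have hge0 : (H⟦(-k)⟧ : C) ∈ w.Ge 0 := by
    have := w.shift_mem_Ge k (-k) h2; rwa [add_neg_cancel] at this
  obtain ⟨Y, hY, i, p, hip, hpi⟩ := hkar (H⟦(-k)⟧) ⟨hle0, hge0⟩
    ((shiftFunctor C (-k)).map ε) (by rw [← Functor.map_comp, hε])
  let S := shiftFunctorCompIsoId C (-k) k (by ring)
  refine ⟨Y⟦k⟧, ?_, ?_, (shiftFunctor C k).map i ≫ S.hom.app H,
    S.inv.app H ≫ (shiftFunctor C k).map p, ?_, ?_⟩
  · have := w.shift_mem_Le 0 k hY.1; rwa [zero_add] at this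
  · have := w.shift_mem_Ge 0 k hY.2; rwa [zero_add] at this
  · rw [Category.assoc, Iso.hom_inv_id_app_assoc, ← Functor.map_comp, hip, (shiftFunctor C k).map_id]
  · have hnat := S.hom.naturality ε
    dsimp only [Functor.comp_map, Functor.id_map] at hnat
    rw [Category.assoc, ← Functor.map_comp_assoc, hpi, hnat, Iso.inv_hom_id_app_assoc]

set_option maxHeartbeats 1000000 in
/-- Killing the top weight `m`: given an `m`-decomposition and an `(m-1)`-decomposition
with vanishing composite, produce an `(m-1)`-decomposition whose right part is
as connective as the original right part. -/
lemma killTop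
    (hkar : ∀ X : C, X ∈ w.Le 0 ∩ w.Ge 0 → ∀ e : X ⟶ X, e ≫ e = e →
      ∃ (Y : C) (_ : Y ∈ w.Le 0 ∩ w.Ge 0) (i : Y ⟶ X) (p : X ⟶ Y),
        i ≫ p = 𝟙 Y ∧ p ≫ i = e)
    (m N : ℤ) (hN : m + 1 ≤ N)
    {A O B A' B' : C} (a : A ⟶ O) (b : O ⟶ B) (δ : B ⟶ A⟦(1:ℤ)⟧)
    (hT : Triangle.mk a b δ ∈ distTriang C) (hA : A ∈ w.Le m) (hB : B ∈ w.Ge N)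
    (a' : A' ⟶ O) (b' : O ⟶ B') (δ' : B' ⟶ A'⟦(1:ℤ)⟧)
    (hT' : Triangle.mk a' b' δ' ∈ distTriang C) (hA' : A' ∈ w.Le (m-1)) (hB' : B' ∈ w.Ge m)
    (hz : a ≫ b' = 0) :
    ∃ (X Y : C) (f : X ⟶ O) (g : O ⟶ Y) (δ₁ : Y ⟶ X⟦(1:ℤ)⟧) (σ : X ⟶ A),
      (Triangle.mk f g δ₁ ∈ distTriang C) ∧ X ∈ w.Le (m-1) ∧ Y ∈ w.Ge N ∧ f = σ ≫ a := by
  classical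
  -- lift of `a` through `a'`, and of `a'` through `a`
  obtain ⟨c, hc⟩ : ∃ c : A ⟶ A', a = c ≫ a' := Triangle.coyoneda_exact₂ _ hT' a hz
  have hab : a' ≫ b = 0 := w.horth hA' hB (by omega) _
  obtain ⟨d, hd⟩ : ∃ d : A' ⟶ A, a' = d ≫ a := Triangle.coyoneda_exact₂ _ hT a' hab
  -- decomposition of A at m-1
  obtain ⟨A₁, H, p, q, r, hTd, hA₁, hHge'⟩ := w.decompK (m-1) A
  have hHge : H ∈ w.Ge m := by rwa [sub_add_cancel] at hHge'
  have hHle : H ∈ w.Le m := by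
    refine w.charLe m ?_
    intro Z hZ φ
    have hqφ : q ≫ φ = 0 := w.horth hA hZ (by omega) _
    obtain ⟨ω, hω⟩ : ∃ ω : (A₁⟦(1:ℤ)⟧ : C) ⟶ Z, φ = r ≫ ω := Triangle.yoneda_exact₃ _ hTd φ hqφ
    have hA₁s : (A₁⟦(1:ℤ)⟧ : C) ∈ w.Le m := by
      have := w.shift_mem_Le (m-1) 1 hA₁; rwa [sub_add_cancel] at this
    rw [hω, w.horth hA₁s hZ (by omega) ω, comp_zero]
  -- the inverse rotation of the top triangle
  have hTinv := inv_rot_of_distTriang _ hT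
  set w₀ : (B⟦(-1:ℤ)⟧ : C) ⟶ A := (Triangle.mk a b δ).invRotate.mor₁ with hw₀def
  have hw₀a : w₀ ≫ a = 0 := comp_distTriang_mor_zero₁₂ _ hTinv
  have h1t : (𝟙 A - c ≫ d) ≫ a = 0 := by
    rw [Preadditive.sub_comp, Category.id_comp, Category.assoc, ← hd, ← hc, sub_self]
  obtain ⟨u, hu⟩ : ∃ u : A ⟶ (B⟦(-1:ℤ)⟧ : C), 𝟙 A - c ≫ d = u ≫ w₀ :=
    Triangle.coyoneda_exact₂ _ hTinv (𝟙 A - c ≫ d) h1t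
  -- decomposition of B⟦-1⟧ at m
  obtain ⟨L, R, i, j, κ, hTL, hLle, hRge⟩ := w.decompK m (B⟦(-1:ℤ)⟧)
  have hLge : L ∈ w.Ge m := by
    have hm1 : L ∈ w.Ge ((m-1)+1) := by
      refine w.charGe (m-1) ?_
      intro W hW φ
      have hφi : φ ≫ i = 0 := by
        have hB1 : (B⟦(-1:ℤ)⟧ : C) ∈ w.Ge (N + (-1)) := w.shift_mem_Ge N (-1) hB
        exact w.horth hW hB1 (by omega) _
      obtain ⟨g, hg⟩ := Triangle.coyoneda_exact₂ _ (inv_rot_of_distTriang _ hTL) φ hφi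
      have hRs : (R⟦(-1:ℤ)⟧ : C) ∈ w.Ge m := by
        have := w.shift_mem_Ge (m+1) (-1) hRge; rwa [add_neg_cancel_right] at this
      rw [hg, w.horth hW hRs (by omega) g]; exact zero_comp
    rwa [sub_add_cancel] at hm1
  have huj : u ≫ j = 0 := w.horth hA hRge (by omega) _
  obtain ⟨lam, hlam⟩ : ∃ lam : A ⟶ L, u = lam ≫ i := Triangle.coyoneda_exact₂ _ hTL u huj
  have hplam : p ≫ lam = 0 := w.horth hA₁ hLge (by omega) _
  obtain ⟨ν, hν⟩ : ∃ ν : H ⟶ L, lam = q ≫ ν := Triangle.yoneda_exact₂ _ hTd lam hplam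
  -- the key morphisms
  set γ₀ : H ⟶ A := ν ≫ i ≫ w₀ with hγ₀def
  have hqγ₀ : q ≫ γ₀ = 𝟙 A - c ≫ d := by
    calc q ≫ γ₀ = ((q ≫ ν) ≫ i) ≫ w₀ := by simp [hγ₀def]
    _ = u ≫ w₀ := by rw [← hν, ← hlam]
    _ = 𝟙 A - c ≫ d := hu.symm
  have hγ₀a : γ₀ ≫ a = 0 := by
    rw [hγ₀def, Category.assoc, Category.assoc, hw₀a, comp_zero, comp_zero]
  have htq : (c ≫ d) ≫ q = 0 := by
    rw [Category.assoc, w.horth hA' hHge (by omega) (d ≫ q), comp_zero]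
  set ε : H ⟶ H := γ₀ ≫ q with hεdef
  have hqε : q ≫ ε = q := by
    rw [hεdef, ← Category.assoc, hqγ₀, Preadditive.sub_comp, Category.id_comp, htq, sub_zero]
  have hεε : ε ≫ ε = ε := by
    calc ε ≫ ε = γ₀ ≫ (q ≫ ε) := by rw [hεdef]; simp only [Category.assoc]
    _ = ε := by rw [hqε, hεdef]
  -- split the idempotent
  obtain ⟨H₀, hH₀le, hH₀ge, i₁, p₁, hi₁p₁, hp₁i₁⟩ := w.karSplit hkar m hHle hHge ε hεε
  set γ'' : H₀ ⟶ A := i₁ ≫ γ₀ with hγ''def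
  set q' : A ⟶ H₀ := q ≫ p₁ with hq'def
  have hγq' : γ'' ≫ q' = 𝟙 H₀ := by
    calc γ'' ≫ q' = i₁ ≫ (γ₀ ≫ q) ≫ p₁ := by rw [hγ''def, hq'def]; simp only [Category.assoc]
    _ = i₁ ≫ (p₁ ≫ i₁) ≫ p₁ := by rw [← hεdef, hp₁i₁]
    _ = (i₁ ≫ p₁) ≫ (i₁ ≫ p₁) := by simp only [Category.assoc]
    _ = 𝟙 H₀ := by rw [hi₁p₁, Category.id_comp]
  have hγ''a : γ'' ≫ a = 0 := by rw [hγ''def, Category.assoc, hγ₀a, comp_zero]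
  -- the new left piece X
  obtain ⟨X, π, δX, hTX⟩ := distinguished_cocone_triangle γ''
  have hγπ : γ'' ≫ π = 0 := comp_distTriang_mor_zero₁₂ _ hTX
  have hδX : δX = 0 := by
    have h31 := comp_distTriang_mor_zero₃₁ _ hTX
    have hid : (𝟙 (H₀⟦(1:ℤ)⟧)) = γ''⟦(1:ℤ)⟧' ≫ q'⟦(1:ℤ)⟧' := by
      rw [← Functor.map_comp, hγq', (shiftFunctor C (1:ℤ)).map_id]
    rw [← Category.comp_id δX, hid, ← Category.assoc]
    dsimp only [Triangle.mk] at h31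
    rw [h31]; exact zero_comp
  obtain ⟨ρ, hρ⟩ : ∃ ρ : X ⟶ A, 𝟙 X = ρ ≫ π :=
    Triangle.coyoneda_exact₃ _ hTX (𝟙 X) (by exact (Category.id_comp _).trans hδX)
  have hγe : γ'' ≫ (𝟙 A - q' ≫ γ'') = 0 := by
    rw [Preadditive.comp_sub, Category.comp_id, ← Category.assoc, hγq', Category.id_comp, sub_self]
  obtain ⟨σ, hσ⟩ : ∃ σ : X ⟶ A, 𝟙 A - q' ≫ γ'' = π ≫ σ :=
    Triangle.yoneda_exact₂ _ hTX (𝟙 A - q' ≫ γ'') hγe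
  have hπσπ : π ≫ σ ≫ π = π := by
    have h2 : (𝟙 A - q' ≫ γ'') ≫ π = π := by
      rw [Preadditive.sub_comp, Category.id_comp, Category.assoc, hγπ, comp_zero, sub_zero]
    rw [← Category.assoc, ← hσ, h2]
  have hσπ : σ ≫ π = 𝟙 X := by
    calc σ ≫ π = (ρ ≫ π) ≫ (σ ≫ π) := by rw [← hρ, Category.id_comp]
    _ = ρ ≫ (π ≫ σ ≫ π) := by simp only [Category.assoc]
    _ = 𝟙 X := by rw [hπσπ, ← hρ]
  have hσq' : σ ≫ q' = 0 := by
    have h1 : π ≫ σ ≫ q' = 0 := by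
      have h2 : (𝟙 A - q' ≫ γ'') ≫ q' = 0 := by
        rw [Preadditive.sub_comp, Category.id_comp, Category.assoc, hγq', Category.comp_id, sub_self]
      rw [← Category.assoc, ← hσ, h2]
    calc σ ≫ q' = (ρ ≫ π) ≫ (σ ≫ q') := by rw [← hρ, Category.id_comp]
    _ = ρ ≫ (π ≫ σ ≫ q') := by simp only [Category.assoc]
    _ = 0 := by rw [h1, comp_zero]
  have hσq : σ ≫ q = 0 := by
    have hq : q' ≫ i₁ = q := by rw [hq'def, Category.assoc, hp₁i₁, hqε]
    rw [← hq, ← Category.assoc, hσq', zero_comp]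
  have hXle : X ∈ w.Le (m-1) := by
    refine w.charLe (m-1) ?_
    intro Z hZ φ
    have hZm : Z ∈ w.Ge m := by rwa [sub_add_cancel] at hZ
    have hpψ : p ≫ π ≫ φ = 0 := w.horth hA₁ hZm (by omega) _
    obtain ⟨ϱ, hϱ⟩ : ∃ ϱ : H ⟶ Z, π ≫ φ = q ≫ ϱ := Triangle.yoneda_exact₂ _ hTd (π ≫ φ) hpψ
    calc φ = (σ ≫ π) ≫ φ := by rw [hσπ, Category.id_comp]
    _ = σ ≫ (q ≫ ϱ) := by rw [Category.assoc, hϱ]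
    _ = 0 := by rw [← Category.assoc, hσq, zero_comp]
  -- the new triangle
  obtain ⟨Y, b₁, δ₁, hTY⟩ := distinguished_cocone_triangle (σ ≫ a)
  have hπf : π ≫ σ ≫ a = a := by
    have h2 : (𝟙 A - q' ≫ γ'') ≫ a = a := by
      rw [Preadditive.sub_comp, Category.id_comp, Category.assoc, hγ''a, comp_zero, sub_zero]
    rw [← Category.assoc, ← hσ, h2]
  have hYge : Y ∈ w.Ge N := by
    have hN1 : Y ∈ w.Ge ((N-1)+1) := by
      refine w.charGe (N-1) ?_
      intro W hW φ
      have hθ : (φ ≫ δ₁) ≫ σ⟦(1:ℤ)⟧' = 0 := by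
        have hθa : ((φ ≫ δ₁) ≫ σ⟦(1:ℤ)⟧') ≫ a⟦(1:ℤ)⟧' = 0 := by
          have h31 : δ₁ ≫ (σ ≫ a)⟦(1:ℤ)⟧' = 0 := comp_distTriang_mor_zero₃₁ _ hTY
          calc ((φ ≫ δ₁) ≫ σ⟦(1:ℤ)⟧') ≫ a⟦(1:ℤ)⟧' = φ ≫ (δ₁ ≫ (σ ≫ a)⟦(1:ℤ)⟧') := by
                rw [Functor.map_comp]; simp only [Category.assoc]
          _ = 0 := by rw [h31, comp_zero]
        obtain ⟨θ', hθ'⟩ : ∃ θ' : W ⟶ B, (φ ≫ δ₁) ≫ σ⟦(1:ℤ)⟧' = θ' ≫ δ :=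
          Triangle.coyoneda_exact₁ _ hT _ hθa
        rw [hθ', w.horth hW hB (by omega) θ', zero_comp]
      have hη : φ ≫ δ₁ = 0 := by
        have hid : (𝟙 (X⟦(1:ℤ)⟧)) = σ⟦(1:ℤ)⟧' ≫ π⟦(1:ℤ)⟧' := by
          rw [← Functor.map_comp, hσπ, (shiftFunctor C (1:ℤ)).map_id]
        rw [← Category.comp_id (φ ≫ δ₁), hid, ← Category.assoc, hθ, zero_comp]
      obtain ⟨χ, hχ⟩ : ∃ χ : W ⟶ O, φ = χ ≫ b₁ := Triangle.coyoneda_exact₃ _ hTY φ hη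
      have hχb : χ ≫ b = 0 := w.horth hW hB (by omega) _
      obtain ⟨χ', hχ'⟩ : ∃ χ' : W ⟶ A, χ = χ' ≫ a := Triangle.coyoneda_exact₂ _ hT χ hχb
      have hab₁ : a ≫ b₁ = 0 := by
        have h12 : (σ ≫ a) ≫ b₁ = 0 := comp_distTriang_mor_zero₁₂ _ hTY
        rw [← hπf, Category.assoc, h12, comp_zero]
      rw [hχ, hχ', Category.assoc, hab₁, comp_zero]
    rwa [sub_add_cancel] at hN1
  exact ⟨X, Y, σ ≫ a, b₁, δ₁, σ, hTY, hXle, hYge, rfl⟩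

set_option maxHeartbeats 1000000 in
lemma mainAux
    (hkar : ∀ X : C, X ∈ w.Le 0 ∩ w.Ge 0 → ∀ e : X ⟶ X, e ≫ e = e →
      ∃ (Y : C) (_ : Y ∈ w.Le 0 ∩ w.Ge 0) (i : Y ⟶ X) (p : X ⟶ Y),
        i ≫ p = 𝟙 Y ∧ p ≫ i = e) (k : ℕ) :
    ∀ (m n N : ℤ), n = m + k → n + 1 ≤ N →
    ∀ {A O B A' B' : C} (a : A ⟶ O) (b : O ⟶ B) (δ : B ⟶ A⟦(1:ℤ)⟧),
      (Triangle.mk a b δ ∈ distTriang C) → A ∈ w.Le n → B ∈ w.Ge N →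
    ∀ (a' : A' ⟶ O) (b' : O ⟶ B') (δ' : B' ⟶ A'⟦(1:ℤ)⟧),
      (Triangle.mk a' b' δ' ∈ distTriang C) → A' ∈ w.Le (m-1) → B' ∈ w.Ge m →
      a ≫ b' = 0 →
    ∃ (X Y : C) (f : X ⟶ O) (g : O ⟶ Y) (δ₁ : Y ⟶ X⟦(1:ℤ)⟧) (σ : X ⟶ A),
      (Triangle.mk f g δ₁ ∈ distTriang C) ∧ X ∈ w.Le (m-1) ∧ Y ∈ w.Ge N ∧ f = σ ≫ a := by
  induction k with
  | zero =>
      intro m n N hnm hN A O B A' B' a b δ hT hA hB a' b' δ' hT' hA' hB' hz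
      rw [show n = m by omega] at hA
      exact w.killTop hkar m N (by omega) a b δ hT hA hB a' b' δ' hT' hA' hB' hz
  | succ k ih =>
      intro m n N hnm hN A O B A' B' a b δ hT hA hB a' b' δ' hT' hA' hB' hz
      -- truncate the top piece at n-1
      obtain ⟨A₂, Hn, p₂, q₂, r₂, hT₂, hA₂, hHn'⟩ := w.decompK (n-1) A
      have hHn : Hn ∈ w.Ge n := by rwa [sub_add_cancel] at hHn'
      obtain ⟨B₂, b₂, δ₂, hT₃⟩ := distinguished_cocone_triangle (p₂ ≫ a)
      have hB₂ : B₂ ∈ w.Ge n := by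
        have h' : B₂ ∈ w.Ge ((n-1)+1) := by
          refine w.charGe (n-1) ?_
          intro W hW φ
          have hθ : (φ ≫ δ₂) ≫ p₂⟦(1:ℤ)⟧' = 0 := by
            have hθa : ((φ ≫ δ₂) ≫ p₂⟦(1:ℤ)⟧') ≫ a⟦(1:ℤ)⟧' = 0 := by
              have h31 : δ₂ ≫ (p₂ ≫ a)⟦(1:ℤ)⟧' = 0 := comp_distTriang_mor_zero₃₁ _ hT₃
              calc ((φ ≫ δ₂) ≫ p₂⟦(1:ℤ)⟧') ≫ a⟦(1:ℤ)⟧'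
                  = φ ≫ (δ₂ ≫ (p₂ ≫ a)⟦(1:ℤ)⟧') := by
                    rw [Functor.map_comp]; simp only [Category.assoc]
              _ = 0 := by rw [h31, comp_zero]
            obtain ⟨θ', hθ'⟩ : ∃ θ' : W ⟶ B, (φ ≫ δ₂) ≫ p₂⟦(1:ℤ)⟧' = θ' ≫ δ :=
              Triangle.coyoneda_exact₁ _ hT _ hθa
            rw [hθ', w.horth hW hB (by omega) θ', zero_comp]
          have hη : φ ≫ δ₂ = 0 := by
            obtain ⟨ζ, hζ⟩ : ∃ ζ : W ⟶ Hn, φ ≫ δ₂ = ζ ≫ r₂ :=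
              Triangle.coyoneda_exact₁ _ hT₂ _ hθ
            rw [hζ, w.horth hW hHn (by omega) ζ, zero_comp]
          obtain ⟨χ, hχ⟩ : ∃ χ : W ⟶ O, φ = χ ≫ b₂ := Triangle.coyoneda_exact₃ _ hT₃ φ hη
          have hχb : χ ≫ b = 0 := w.horth hW hB (by omega) _
          obtain ⟨χ', hχ'⟩ : ∃ χ' : W ⟶ A, χ = χ' ≫ a := Triangle.coyoneda_exact₂ _ hT χ hχb
          have h0 : p₂ ≫ (a ≫ b₂) = 0 := by
            have h00 : (p₂ ≫ a) ≫ b₂ = 0 := comp_distTriang_mor_zero₁₂ _ hT₃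
            rwa [Category.assoc] at h00
          obtain ⟨β, hβ⟩ : ∃ β : Hn ⟶ B₂, a ≫ b₂ = q₂ ≫ β :=
            Triangle.yoneda_exact₂ _ hT₂ (a ≫ b₂) h0
          rw [hχ, hχ', Category.assoc, hβ, ← Category.assoc,
            w.horth hW hHn (by omega) (χ' ≫ q₂), zero_comp]
        rwa [sub_add_cancel] at h'
      have hzz : a ≫ b₂ = 0 := by
        obtain ⟨c, hc⟩ : ∃ c : A ⟶ A', a = c ≫ a' := Triangle.coyoneda_exact₂ _ hT' a hz
        rw [hc, Category.assoc, w.horth hA' hB₂ (by omega) (a' ≫ b₂), comp_zero]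
      -- kill the weight n
      obtain ⟨X₄, Y₄, f₁, b₃, δ₃, σ, hT₄, hX₄, hY₄, hf₁⟩ :=
        w.killTop hkar n N (by omega) a b δ hT hA hB (p₂ ≫ a) b₂ δ₂ hT₃ hA₂ hB₂ hzz
      -- recurse
      have hstep : f₁ ≫ b' = 0 := by rw [hf₁, Category.assoc, hz, comp_zero]
      obtain ⟨X, Y, f, g, δ₅, σ₂, hT₅, hXle, hYge, hf⟩ :=
        ih m (n-1) N (by omega) (by omega) f₁ b₃ δ₃ hT₄ hX₄ hY₄ a' b' δ' hT' hA' hB' hstep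
      exact ⟨X, Y, f, g, δ₅, σ₂ ≫ σ, hT₅, hXle, hYge, by rw [hf, hf₁, Category.assoc]⟩

end WeightStructure

/-- in a weight-Karoubian category, an object without weights `m,…,n`
admits a decomposition avoiding these weights. -/
theorem exists_decomposition_avoiding_weights {C : Type*} [Category C] [Preadditive C]
    [HasZeroObject C] [HasShift C ℤ] [∀ n : ℤ, (CategoryTheory.shiftFunctor C n).Additive]
    [Pretriangulated C] (w : WeightStructure C) (hkar : w.WeightKaroubian)
    (m n : ℤ) (hmn : m ≤ n) (O : C) (hO : w.WithoutWeights m n O) :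
    ∃ (X Y : C) (a : X ⟶ O) (b : O ⟶ Y) (δ : Y ⟶ X⟦(1 : ℤ)⟧),
      (Triangle.mk a b δ ∈ distTriang C) ∧ X ∈ w.Le (m - 1) ∧ Y ∈ w.Ge (n + 1) := by
  obtain ⟨A, B, A', B', a, b, δ, a', b', δ', ⟨hT, hA, hB⟩, ⟨hT', hA', hB'⟩, hz0⟩ := hO
  have hz : a ≫ b' = 0 := by rwa [Category.id_comp] at hz0
  have hB'm : B' ∈ w.Ge m := by rwa [sub_add_cancel] at hB'
  obtain ⟨X, Y, f, g, δ₁, σ, hT₁, hXle, hYge, -⟩ :=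
    w.mainAux hkar (n - m).toNat m n (n + 1) (by omega) (by omega) a b δ hT hA hB
      a' b' δ' hT' hA' hB'm hz
  exact ⟨X, Y, f, g, δ₁, hT₁, hXle, hYge⟩
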